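/- Let I ⊆ {1,...,n} be a set of size d. Then I indexes a facet of the cyclic d-polytope C(d,n) realized as the convex hull of points γ(t₁),...,γ(t_n) on the moment curve γ(t)=(t,t²,...,t^d) with t₁<...<t_n, if and only if for any two indices j < k in {1,...,n}\I, the set {i ∈ I : j < i < k} has even cardinality (Gale's evenness condition). -/

import Mathlib

lemma prod_pos_iff_even_negcount {ι : Type*} (F : Finset ι) (f : ι → ℝ)
    (h : ∀ i ∈ F, f i ≠ 0) :
    (0 < ∏ i ∈ F, f i) ↔ Even ((F.filter fun i => f i < 0).card) := by
  classical
  revert h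
  refine Finset.induction_on F ?_ ?_
  · intro _; simp
  · intro a F haF ih h
    have hf : f a ≠ 0 := h a (Finset.mem_insert_self _ _)
    have hF : ∀ i ∈ F, f i ≠ 0 := fun i hi => h i (Finset.mem_insert_of_mem hi)
    have hprod_ne : (∏ i ∈ F, f i) ≠ 0 := Finset.prod_ne_zero_iff.mpr hF
    have hih := ih hF
    rw [Finset.prod_insert haF, Finset.filter_insert]
    by_cases hfa : f a < 0
    · rw [if_pos hfa, Finset.card_insert_of_notMem
        (fun hmem => haF (Finset.mem_of_mem_filter a hmem)), Nat.even_add_one, ← hih]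
      constructor
      · intro h0 h0'
        nlinarith
      · intro h0
        have hlt : ∏ i ∈ F, f i < 0 := lt_of_le_of_ne (not_lt.mp h0) hprod_ne
        exact mul_pos_of_neg_of_neg hfa hlt
    · have hfa' : 0 < f a := lt_of_le_of_ne (not_lt.mp hfa) (Ne.symm hf)
      rw [if_neg hfa, ← hih, mul_pos_iff]
      constructor
      · rintro (⟨_, h2⟩ | ⟨h1, _⟩)
        · exact h2
        · exact absurd hfa' (not_lt.mpr h1.le)
      · intro h2; exact Or.inl ⟨hfa', h2⟩

lemma moment_affineIndependent {d m : ℕ} (hm : m ≤ d + 1) (s : Fin m → ℝ)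
    (hs : Function.Injective s) :
    AffineIndependent ℝ (fun i => fun k : Fin d => s i ^ (k.1 + 1)) := by
  classical
  rw [affineIndependent_iff]
  intro F w hw0 hsum e he
  set w' : Fin m → ℝ := fun i => if i ∈ F then w i else 0 with hw'def
  have hw'0 : ∑ i, w' i = 0 := by
    rw [Finset.sum_ite_mem, Finset.univ_inter]; exact hw0
  have hcoord : ∀ k : Fin d, ∑ i, w' i * s i ^ (k.1 + 1) = 0 := by
    intro k
    have h1 := congrFun hsum k
    rw [Finset.sum_apply] at h1
    have h2 : ∑ i ∈ F, w i * s i ^ (k.1 + 1) = 0 := by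
      simpa [smul_eq_mul] using h1
    calc ∑ i, w' i * s i ^ (k.1 + 1)
        = ∑ i, (if i ∈ F then w i * s i ^ (k.1 + 1) else 0) := by
          refine Finset.sum_congr rfl fun i _ => ?_
          by_cases hi : i ∈ F <;> simp [hw'def, hi]
      _ = ∑ i ∈ F, w i * s i ^ (k.1 + 1) := by rw [Finset.sum_ite_mem, Finset.univ_inter]
      _ = 0 := h2
  have hvec : Matrix.vecMul w' (Matrix.vandermonde s) = 0 := by
    funext j
    have : Matrix.vecMul w' (Matrix.vandermonde s) j = ∑ i, w' i * s i ^ (j : ℕ) := by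
      simp [Matrix.vecMul, dotProduct, Matrix.vandermonde]
    rw [this]
    obtain ⟨jv, hj⟩ := j
    cases jv with
    | zero => simpa [pow_zero] using hw'0
    | succ kk =>
        have hk : kk < d := by omega
        simpa using hcoord ⟨kk, hk⟩
  have hdet : IsUnit (Matrix.vandermonde s).det := by
    rw [Matrix.det_vandermonde]
    apply isUnit_iff_ne_zero.mpr
    apply Finset.prod_ne_zero_iff.mpr
    intro i _
    apply Finset.prod_ne_zero_iff.mpr
    intro j hj
    have : i < j := Finset.mem_Ioi.mp hj
    exact sub_ne_zero.mpr (fun hc => absurd (hs hc) (ne_of_gt this))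
  have hinj : Function.Injective (Matrix.vandermonde s).vecMul :=
    Matrix.vecMul_injective_iff_isUnit.mpr ((Matrix.isUnit_iff_isUnit_det _).mpr hdet)
  have hw'z : w' = 0 := hinj (hvec.trans (Matrix.zero_vecMul _).symm)
  have := congrFun hw'z e
  simpa [hw'def, he] using this

noncomputable def ell {d : ℕ} (b : Fin d → ℝ) : (Fin d → ℝ) →L[ℝ] ℝ :=
  LinearMap.toContinuousLinearMap (∑ k, b k • (LinearMap.proj k : (Fin d → ℝ) →ₗ[ℝ] ℝ))

lemma ell_apply {d : ℕ} (b : Fin d → ℝ) (x : Fin d → ℝ) :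
    ell b x = ∑ k, b k * x k := by
  simp [ell, LinearMap.sum_apply, LinearMap.proj_apply, smul_eq_mul]

lemma eval_coeff_fin {d : ℕ} (Q : Polynomial ℝ) (hQ : Q.natDegree ≤ d) (x : ℝ) :
    Q.eval x = Q.coeff 0 + ∑ k : Fin d, Q.coeff (k.1 + 1) * x ^ (k.1 + 1) := by
  rw [Polynomial.eval_eq_sum_range' (Nat.lt_succ_of_le hQ), Finset.sum_range_succ']
  rw [Fin.sum_univ_eq_sum_range (fun k => Q.coeff (k + 1) * x ^ (k + 1))]
  ring

lemma prod_pair_pos_iff_even {n : ℕ} (t : Fin n → ℝ) (ht : StrictMono t) (I : Finset (Fin n))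
    {j k : Fin n} (hj : j ∉ I) (hk : k ∉ I) (hjk : j < k) :
    (0 < (∏ i ∈ I, (t j - t i)) * (∏ i ∈ I, (t k - t i))) ↔
      Even ((I.filter fun i => j < i ∧ i < k).card) := by
  classical
  rw [← Finset.prod_mul_distrib]
  rw [prod_pos_iff_even_negcount I _ (fun i hi => by
    have h1 : t j - t i ≠ 0 := sub_ne_zero.mpr (fun hc => hj (ht.injective hc ▸ hi))
    have h2 : t k - t i ≠ 0 := sub_ne_zero.mpr (fun hc => hk (ht.injective hc ▸ hi))
    exact mul_ne_zero h1 h2)]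
  have hfe : I.filter (fun i => (t j - t i) * (t k - t i) < 0)
      = I.filter (fun i => j < i ∧ i < k) := by
    apply Finset.filter_congr
    intro i hi
    have h1 : t j - t i < 0 ↔ j < i := by rw [sub_neg]; exact ht.lt_iff_lt
    have h2 : 0 < t j - t i ↔ i < j := by rw [sub_pos]; exact ht.lt_iff_lt
    have h3 : t k - t i < 0 ↔ k < i := by rw [sub_neg]; exact ht.lt_iff_lt
    have h4 : 0 < t k - t i ↔ i < k := by rw [sub_pos]; exact ht.lt_iff_lt
    rw [mul_neg_iff]
    simp only [h1, h2, h3, h4]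
    constructor
    · rintro (⟨ha, hb⟩ | ⟨ha, hb⟩)
      · exact absurd (hb.trans ha) (asymm hjk)
      · exact ⟨ha, hb⟩
    · intro hx; exact Or.inr hx
  rw [hfe]

lemma face_eq {n d : ℕ} (p : Fin n → (Fin d → ℝ)) (I : Finset (Fin n)) (hne : I.Nonempty)
    (ℓ : (Fin d → ℝ) →L[ℝ] ℝ) (c : ℝ) (hIc : ∀ i ∈ I, ℓ (p i) = c)
    (hlt : ∀ j, j ∉ I → ℓ (p j) < c) :
    convexHull ℝ (p '' ↑I)
      = {x ∈ convexHull ℝ (Set.range p) | ∀ y ∈ convexHull ℝ (Set.range p), ℓ y ≤ ℓ x} := by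
  classical
  have hA_le : ∀ y ∈ convexHull ℝ (Set.range p), ℓ y ≤ c := by
    intro y hy
    have hsub : convexHull ℝ (Set.range p) ⊆ {x | ℓ x ≤ c} := by
      apply convexHull_min
      · rintro _ ⟨m, rfl⟩
        by_cases hm : m ∈ I
        · exact (hIc m hm).le
        · exact (hlt m hm).le
      · exact convex_halfSpace_le (ℓ : (Fin d → ℝ) →ₗ[ℝ] ℝ).isLinear c
    exact hsub hy
  have hB_eq : ∀ x ∈ convexHull ℝ (p '' ↑I), ℓ x = c := by
    intro x hx
    have hsub : convexHull ℝ (p '' ↑I) ⊆ {x | ℓ x = c} := by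
      apply convexHull_min
      · rintro _ ⟨i, hi, rfl⟩
        exact hIc i hi
      · exact convex_hyperplane (ℓ : (Fin d → ℝ) →ₗ[ℝ] ℝ).isLinear c
    exact hsub hx
  apply Set.Subset.antisymm
  · intro x hx
    refine ⟨convexHull_mono (Set.image_subset_range p ↑I) hx, fun y hy => ?_⟩
    rw [hB_eq x hx]; exact hA_le y hy
  · rintro x ⟨hxA, hxmax⟩
    obtain ⟨i0, hi0⟩ := hne
    have hpi0 : p i0 ∈ convexHull ℝ (Set.range p) := subset_convexHull ℝ _ ⟨i0, rfl⟩
    have hℓx : ℓ x = c :=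
      le_antisymm (hA_le x hxA) (by rw [← hIc i0 hi0]; exact hxmax _ hpi0)
    rw [convexHull_range_eq_exists_affineCombination] at hxA
    obtain ⟨s, w, hw0, hw1, hx⟩ := hxA
    rw [Finset.affineCombination_eq_linear_combination s p w hw1] at hx
    have hℓsum : ∑ i ∈ s, w i * ℓ (p i) = c := by
      have : ℓ x = ∑ i ∈ s, w i * ℓ (p i) := by
        rw [← hx, map_sum]
        exact Finset.sum_congr rfl fun i _ => by rw [map_smul, smul_eq_mul]
      rw [← this, hℓx]
    have hsum0 : ∑ i ∈ s, w i * (c - ℓ (p i)) = 0 := by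
      simp only [mul_sub]
      rw [Finset.sum_sub_distrib, ← Finset.sum_mul, hw1, hℓsum, one_mul, sub_self]
    have hzero : ∀ i ∈ s, w i * (c - ℓ (p i)) = 0 := by
      refine (Finset.sum_eq_zero_iff_of_nonneg ?_).mp hsum0
      intro i hi
      apply mul_nonneg (hw0 i hi)
      rw [sub_nonneg]
      by_cases hiI : i ∈ I
      · exact (hIc i hiI).le
      · exact (hlt i hiI).le
    have hwI : ∀ i ∈ s, i ∉ I → w i = 0 := by
      intro i hi hiI
      have h2 : c - ℓ (p i) ≠ 0 := sub_ne_zero.mpr (Ne.symm (hlt i hiI).ne)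
      exact (mul_eq_zero.mp (hzero i hi)).resolve_right h2
    set sI := s.filter (· ∈ I) with hsI
    have hsum_eq : ∑ i ∈ sI, w i = 1 := by
      rw [hsI, Finset.sum_filter_of_ne, hw1]
      intro i hi hne
      by_contra hiI
      exact hne (hwI i hi hiI)
    have hx_eq : ∑ i ∈ sI, w i • p i = x := by
      rw [hsI, Finset.sum_filter_of_ne, hx]
      intro i hi hne
      by_contra hiI
      exact hne (by rw [hwI i hi hiI, zero_smul])
    have hmem : sI.centerMass w p ∈ convexHull ℝ (p '' ↑I) := by
      apply Finset.centerMass_mem_convexHull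
      · intro i hi; exact hw0 i (Finset.mem_of_mem_filter i hi)
      · rw [hsum_eq]; exact one_pos
      · intro i hi
        exact ⟨i, (Finset.mem_filter.mp hi).2, rfl⟩
    rwa [Finset.centerMass_eq_of_sum_1 _ _ hsum_eq, hx_eq] at hmem

lemma facet_dim {d n : ℕ} (hd : 1 ≤ d) (t : Fin n → ℝ) (ht : StrictMono t)
    (p : Fin n → (Fin d → ℝ)) (hp : ∀ k i, p k i = t k ^ (i.1 + 1))
    (I : Finset (Fin n)) (hI : I.card = d) :
    Module.finrank ℝ (affineSpan ℝ (convexHull ℝ (p '' ↑I))).direction = d - 1 := by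
  classical
  set e := I.orderIsoOfFin hI with he
  have haff : AffineIndependent ℝ (fun i : Fin d => p (e i)) := by
    have hinj : Function.Injective (fun i : Fin d => t ((e i : Fin n))) := by
      intro a b hab
      have := ht.injective hab
      exact e.injective (Subtype.val_injective this)
    have h1 := moment_affineIndependent (le_of_lt (Nat.lt_succ_self d))
      (fun i : Fin d => t ((e i : Fin n))) hinj
    have h2 : (fun i : Fin d => p (e i)) = fun i => fun k : Fin d => t ((e i : Fin n)) ^ (k.1 + 1) := by
      funext i k; exact hp _ _
    rw [h2]; exact h1
  have hrange : Set.range (fun i : Fin d => p ((e i : Fin n))) = p '' ↑I := by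
    have h1 : Set.range (fun i : Fin d => ((e i : Fin n))) = ↑I := by
      ext x
      constructor
      · rintro ⟨i, rfl⟩; exact (e i).2
      · intro hx; exact ⟨e.symm ⟨x, hx⟩, by simp⟩
    rw [show (fun i : Fin d => p ((e i : Fin n))) = p ∘ (fun i : Fin d => ((e i : Fin n))) from rfl,
      Set.range_comp, h1]
  rw [affineSpan_convexHull, direction_affineSpan, ← hrange]
  exact haff.finrank_vectorSpan (by simp; omega)

open scoped BigOperators

theorem stmt4 (d n : ℕ) (hd : 1 ≤ d) (hn : d + 1 ≤ n)
    (t : Fin n → ℝ) (ht : StrictMono t)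
    -- the points on the moment curve γ(s) = (s, s², ..., s^d)
    (p : Fin n → (Fin d → ℝ)) (hp : ∀ k i, p k i = t k ^ (i.1 + 1))
    (I : Finset (Fin n)) (hI : I.card = d) :
    -- I indexes a facet of the cyclic polytope C(d,n) = conv{p 1, ..., p n}
    (IsExposed ℝ (convexHull ℝ (Set.range p)) (convexHull ℝ (p '' ↑I)) ∧
        Module.finrank ℝ (affineSpan ℝ (convexHull ℝ (p '' ↑I))).direction = d - 1) ↔
      -- iff I satisfies Gale's evenness condition
      ∀ j k : Fin n, j ∉ I → k ∉ I → j < k →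
        Even ((I.filter fun i => j < i ∧ i < k).card) := by
  classical
  have hIne : I.Nonempty := Finset.card_pos.mp (by omega)
  set P : Polynomial ℝ := ∏ i ∈ I, (Polynomial.X - Polynomial.C (t i)) with hPdef
  have hPdeg : P.natDegree = d := by
    rw [hPdef, Polynomial.natDegree_prod _ _ (fun i _ => Polynomial.X_sub_C_ne_zero (t i))]
    simp [Polynomial.natDegree_X_sub_C, hI]
  have hPmonic : P.Monic :=
    Polynomial.monic_prod_of_monic _ _ (fun i _ => Polynomial.monic_X_sub_C (t i))
  have hPeval : ∀ m, P.eval (t m) = ∏ i ∈ I, (t m - t i) := by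
    intro m; simp [hPdef, Polynomial.eval_prod]
  have hIeval : ∀ i ∈ I, P.eval (t i) = 0 := fun i hi => by
    rw [hPeval]; exact Finset.prod_eq_zero hi (sub_self _)
  have hs_ne : ∀ m, m ∉ I → (∏ i ∈ I, (t m - t i)) ≠ 0 := by
    intro m hm
    apply Finset.prod_ne_zero_iff.mpr
    intro i hi
    exact sub_ne_zero.mpr (fun hc => hm (ht.injective hc ▸ hi))
  constructor
  · rintro ⟨hexp, hdim⟩ j k hj hk hjk
    obtain ⟨i0, hi0⟩ := hIne
    have hmemB : ∀ i ∈ I, p i ∈ convexHull ℝ (p '' ↑I) := fun i hi =>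
      subset_convexHull ℝ _ (Set.mem_image_of_mem p hi)
    have hmemA : ∀ m, p m ∈ convexHull ℝ (Set.range p) := fun m =>
      subset_convexHull ℝ _ ⟨m, rfl⟩
    obtain ⟨ℓ, hB⟩ := hexp ⟨p i0, hmemB i0 hi0⟩
    have hBmem : ∀ i ∈ I, ∀ y ∈ convexHull ℝ (Set.range p), ℓ y ≤ ℓ (p i) := by
      intro i hi
      have := hB ▸ (hmemB i hi)
      exact this.2
    set c : ℝ := ℓ (p i0) with hc
    have hle : ∀ m, ℓ (p m) ≤ c := fun m => hBmem i0 hi0 (p m) (hmemA m)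
    have hIc : ∀ i ∈ I, ℓ (p i) = c := fun i hi =>
      le_antisymm (hle i) (hBmem i hi (p i0) (hmemA i0))
    set b : Fin d → ℝ := fun k' => ℓ (fun j' => if k' = j' then 1 else 0) with hbdef
    have hℓp : ∀ m, ℓ (p m) = ∑ k' : Fin d, b k' * t m ^ (k'.1 + 1) := by
      intro m
      have hb := LinearMap.pi_apply_eq_sum_univ (ℓ : (Fin d → ℝ) →ₗ[ℝ] ℝ) (p m)
      simp only [ContinuousLinearMap.coe_coe] at hb
      rw [hb]
      exact Finset.sum_congr rfl fun k' _ => by rw [smul_eq_mul, hp, mul_comm]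
    set Q : Polynomial ℝ :=
      Polynomial.C c - ∑ k' : Fin d, Polynomial.C (b k') * Polynomial.X ^ (k'.1 + 1) with hQdef
    have hQeval : ∀ m, Q.eval (t m) = c - ℓ (p m) := by
      intro m
      rw [hQdef, Polynomial.eval_sub, Polynomial.eval_C, Polynomial.eval_finset_sum, hℓp m]
      congr 1
      exact Finset.sum_congr rfl fun k' _ => by simp
    have hQdeg : Q.natDegree ≤ d := by
      rw [hQdef]
      refine le_trans (Polynomial.natDegree_sub_le _ _) (max_le (by simp) ?_)
      apply Polynomial.natDegree_sum_le_of_forall_le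
      intro k' _
      refine le_trans (Polynomial.natDegree_mul_le) ?_
      simp [Polynomial.natDegree_X_pow, Polynomial.natDegree_C]
    have hstrict : ∀ j', j' ∉ I → ℓ (p j') < c := by
      intro j' hj'
      rcases lt_or_eq_of_le (hle j') with h | h
      · exact h
      exfalso
      have htj' : t j' ∉ I.image t := by
        intro hmem
        obtain ⟨i, hi, hti⟩ := Finset.mem_image.mp hmem
        exact hj' (ht.injective hti ▸ hi)
      have hcard : (insert (t j') (I.image t)).card = d + 1 := by
        rw [Finset.card_insert_of_notMem htj', Finset.card_image_of_injective _ ht.injective, hI]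
      have hQ0 : Q = 0 := by
        apply Polynomial.eq_zero_of_natDegree_lt_card_of_eval_eq_zero' Q
          (insert (t j') (I.image t))
        · intro x hx
          rcases Finset.mem_insert.mp hx with rfl | hx
          · rw [hQeval, ← h, sub_self]
          · obtain ⟨i, hi, rfl⟩ := Finset.mem_image.mp hx
            rw [hQeval, hIc i hi, sub_self]
        · rw [hcard]; omega
      have hconst : ∀ m, ℓ (p m) = c := by
        intro m
        have := hQeval m
        rw [hQ0] at this
        simp at this
        linarith
      have hAc : ∀ y ∈ convexHull ℝ (Set.range p), ℓ y = c := by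
        intro y hy
        have hsub : convexHull ℝ (Set.range p) ⊆ {x | ℓ x = c} := by
          apply convexHull_min
          · rintro _ ⟨m, rfl⟩; exact hconst m
          · exact convex_hyperplane (ℓ : (Fin d → ℝ) →ₗ[ℝ] ℝ).isLinear c
        exact hsub hy
      have hBA : convexHull ℝ (p '' ↑I) = convexHull ℝ (Set.range p) := by
        rw [hB]
        apply Set.eq_of_subset_of_subset
        · intro x hx; exact hx.1
        · intro x hx
          exact ⟨hx, fun y hy => by rw [hAc y hy, hAc x hx]⟩
      have haff2 : AffineIndependent ℝ (fun i : Fin (d + 1) => p (Fin.castLE hn i)) := by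
        have h1 := moment_affineIndependent (le_refl (d + 1))
          (fun i : Fin (d + 1) => t (Fin.castLE hn i))
          (ht.injective.comp (Fin.strictMono_castLE hn).injective)
        have h2 : (fun i : Fin (d + 1) => p (Fin.castLE hn i))
            = fun i => fun k' : Fin d => t (Fin.castLE hn i) ^ (k'.1 + 1) := by
          funext i k'; exact hp _ _
        rw [h2]; exact h1
      have h2 : Module.finrank ℝ
          (vectorSpan ℝ (Set.range (fun i : Fin (d + 1) => p (Fin.castLE hn i)))) = d :=
        haff2.finrank_vectorSpan (by simp)
      have h3 : vectorSpan ℝ (Set.range (fun i : Fin (d + 1) => p (Fin.castLE hn i)))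
          ≤ vectorSpan ℝ (convexHull ℝ (p '' ↑I)) := by
        apply vectorSpan_mono
        rw [hBA]
        rintro x ⟨i, rfl⟩
        exact hmemA _
      rw [direction_affineSpan] at hdim
      have h4 := Submodule.finrank_mono h3
      rw [h2, hdim] at h4
      omega
    set a : ℝ := Q.coeff d with hadef
    have hfac : Q = Polynomial.C a * P := by
      rw [← sub_eq_zero]
      by_cases hD0 : Q - Polynomial.C a * P = 0
      · exact hD0
      apply Polynomial.eq_zero_of_natDegree_lt_card_of_eval_eq_zero' _ (I.image t)
      · intro x hx
        obtain ⟨i, hi, rfl⟩ := Finset.mem_image.mp hx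
        rw [Polynomial.eval_sub, Polynomial.eval_mul, Polynomial.eval_C, hIeval i hi,
          hQeval, hIc i hi, sub_self, mul_zero, sub_zero]
      · rw [Finset.card_image_of_injective _ ht.injective, hI]
        rw [Polynomial.natDegree_lt_iff_degree_lt hD0, Polynomial.degree_lt_iff_coeff_zero]
        intro m hm
        rw [Polynomial.coeff_sub, Polynomial.coeff_C_mul]
        rcases eq_or_lt_of_le hm with rfl | hm'
        · rw [← hPdeg, hPmonic.coeff_natDegree, mul_one, hPdeg, ← hadef, sub_self]
        · rw [Polynomial.coeff_eq_zero_of_natDegree_lt (lt_of_le_of_lt hQdeg hm'),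
            Polynomial.coeff_eq_zero_of_natDegree_lt (by rw [hPdeg]; exact hm'),
            mul_zero, sub_self]
    have hQj : 0 < Q.eval (t j) := by rw [hQeval]; exact sub_pos.mpr (hstrict j hj)
    have hQk : 0 < Q.eval (t k) := by rw [hQeval]; exact sub_pos.mpr (hstrict k hk)
    rw [hfac, Polynomial.eval_mul, Polynomial.eval_C, hPeval] at hQj hQk
    have hpp : 0 < (∏ i ∈ I, (t j - t i)) * (∏ i ∈ I, (t k - t i)) := by
      nlinarith [mul_pos hQj hQk, sq_nonneg a]
    exact (prod_pair_pos_iff_even t ht I hj hk hjk).mp hpp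
  · intro hGale
    have hpair : ∀ j k : Fin n, j ∉ I → k ∉ I → j < k →
        0 < (∏ i ∈ I, (t j - t i)) * (∏ i ∈ I, (t k - t i)) := fun j k hj hk hjk =>
      (prod_pair_pos_iff_even t ht I hj hk hjk).mpr (hGale j k hj hk hjk)
    have hsign : (∀ m, m ∉ I → 0 < ∏ i ∈ I, (t m - t i))
        ∨ (∀ m, m ∉ I → (∏ i ∈ I, (t m - t i)) < 0) := by
      by_cases hex : ∃ m0, m0 ∉ I
      · obtain ⟨m0, hm0⟩ := hex
        have key : ∀ m, m ∉ I → (0 < ∏ i ∈ I, (t m - t i) ↔ 0 < ∏ i ∈ I, (t m0 - t i)) := by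
          intro m hm
          rcases lt_trichotomy m m0 with h | h | h
          · rcases mul_pos_iff.mp (hpair m m0 hm hm0 h) with ⟨h1, h2⟩ | ⟨h1, h2⟩
            · exact iff_of_true h1 h2
            · exact iff_of_false (not_lt.mpr h1.le) (not_lt.mpr h2.le)
          · rw [h]
          · rcases mul_pos_iff.mp (hpair m0 m hm0 hm h) with ⟨h1, h2⟩ | ⟨h1, h2⟩
            · exact iff_of_true h2 h1
            · exact iff_of_false (not_lt.mpr h2.le) (not_lt.mpr h1.le)
        by_cases h0 : 0 < ∏ i ∈ I, (t m0 - t i)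
        · left; exact fun m hm => (key m hm).mpr h0
        · right
          intro m hm
          have hne0 : ¬ (0 < ∏ i ∈ I, (t m - t i)) := fun hc => h0 ((key m hm).mp hc)
          exact lt_of_le_of_ne (not_lt.mp hne0) (hs_ne m hm)
      · left; intro m hm; exact absurd ⟨m, hm⟩ hex
    have hval : ∀ (b : Fin d → ℝ) m, ell b (p m) = ∑ k' : Fin d, b k' * t m ^ (k'.1 + 1) := by
      intro b m
      rw [ell_apply]
      exact Finset.sum_congr rfl fun k' _ => by rw [hp]
    have hkey : ∃ (ℓ : (Fin d → ℝ) →L[ℝ] ℝ) (c : ℝ),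
        (∀ i ∈ I, ℓ (p i) = c) ∧ (∀ j, j ∉ I → ℓ (p j) < c) := by
      rcases hsign with hpos | hneg
      · refine ⟨ell (fun k' => -(P.coeff (k'.1 + 1))), P.coeff 0, ?_, ?_⟩
        · intro i hi
          rw [hval]
          have := eval_coeff_fin P (le_of_eq hPdeg) (t i)
          rw [hIeval i hi] at this
          simp only [neg_mul, Finset.sum_neg_distrib]
          linarith
        · intro j hj
          rw [hval]
          have := eval_coeff_fin P (le_of_eq hPdeg) (t j)
          rw [hPeval] at this
          simp only [neg_mul, Finset.sum_neg_distrib]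
          have hpj := hpos j hj
          linarith
      · refine ⟨ell (fun k' => P.coeff (k'.1 + 1)), -(P.coeff 0), ?_, ?_⟩
        · intro i hi
          rw [hval]
          have := eval_coeff_fin P (le_of_eq hPdeg) (t i)
          rw [hIeval i hi] at this
          linarith
        · intro j hj
          rw [hval]
          have := eval_coeff_fin P (le_of_eq hPdeg) (t j)
          rw [hPeval] at this
          have hpj := hneg j hj
          linarith
    obtain ⟨ℓ, c, hIc, hlt⟩ := hkey
    refine ⟨?_, facet_dim hd t ht p hp I hI⟩
    intro _
    exact ⟨ℓ, face_eq p I hIne ℓ c hIc hlt⟩
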